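/- Let G ⊊ ℝⁿ be a domain (nonempty, open, connected, proper subset) and x ∈ G. (i) For every r ∈ (0,1), the j-metric ball B_j(x, log(1+2r)) is contained in the triangular-ratio metric ball B_s(x, r). (ii) For every r ∈ (0, 1/3), B_s(x, r) is contained in B_j(x, log(1 + 2r/(1−3r))). -/
import Mathlib


/-- The triangular ratio metric `s_G(x,y) = sup_{z ∈ ∂G} |x−y|/(|z−x|+|z−y|)`. -/
noncomputable def sMetric {n : ℕ} (G : Set (EuclideanSpace ℝ (Fin n)))
    (x y : EuclideanSpace ℝ (Fin n)) : ℝ :=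
  ⨆ z ∈ frontier G, dist x y / (dist z x + dist z y)

/-- The metric ball `B_s(x,r) = {y ∈ G : s_G(x,y) < r}`. -/
def sBall {n : ℕ} (G : Set (EuclideanSpace ℝ (Fin n))) (x : EuclideanSpace ℝ (Fin n))
    (r : ℝ) : Set (EuclideanSpace ℝ (Fin n)) :=
  {y ∈ G | sMetric G x y < r}

/-- The j-metric `j_G(x,y) = log(1 + |x−y|/min{d_G(x), d_G(y)})`,
where `d_G(z) = dist(z, ∂G)`. -/
noncomputable def jMetric {n : ℕ} (G : Set (EuclideanSpace ℝ (Fin n)))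
    (x y : EuclideanSpace ℝ (Fin n)) : ℝ :=
  Real.log (1 + dist x y /
    min (Metric.infDist x (frontier G)) (Metric.infDist y (frontier G)))

/-- The metric ball `B_j(x,r) = {y ∈ G : j_G(x,y) < r}`. -/
def jBall {n : ℕ} (G : Set (EuclideanSpace ℝ (Fin n))) (x : EuclideanSpace ℝ (Fin n))
    (r : ℝ) : Set (EuclideanSpace ℝ (Fin n)) :=
  {y ∈ G | jMetric G x y < r}

/-- Let G ⊊ ℝⁿ be a domain (nonempty, open, connected, proper subset) and x ∈ G.
(i) For every r ∈ (0,1), B_j(x, log(1+2r)) ⊆ B_s(x, r).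
(ii) For every r ∈ (0, 1/3), B_s(x, r) ⊆ B_j(x, log(1 + 2r/(1−3r))). -/
theorem jBall_subset_sBall_and_sBall_subset_jBall (n : ℕ)
    (G : Set (EuclideanSpace ℝ (Fin n))) (hGo : IsOpen G) (hGc : IsConnected G)
    (hGp : G ≠ Set.univ) (x : EuclideanSpace ℝ (Fin n)) (hx : x ∈ G) :
    (∀ r : ℝ, r ∈ Set.Ioo (0:ℝ) 1 →
      jBall G x (Real.log (1 + 2 * r)) ⊆ sBall G x r) ∧
    (∀ r : ℝ, r ∈ Set.Ioo (0:ℝ) (1/3) →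
      sBall G x r ⊆ jBall G x (Real.log (1 + 2 * r / (1 - 3 * r)))) := by
  have hfr : (frontier G).Nonempty :=
    nonempty_frontier_iff.2 ⟨⟨x, hx⟩, hGp⟩
  -- positivity of distance to the boundary for points of G
  have hdpos : ∀ w ∈ G, 0 < Metric.infDist w (frontier G) := by
    intro w hw
    refine (isClosed_frontier.notMem_iff_infDist_pos hfr).1 ?_
    intro hwf
    exact (hGo.frontier_eq ▸ hwf).2 hw
  constructor
  · -- part (i)
    rintro r ⟨hr0, hr1⟩ y ⟨hy, hjy⟩
    have hdx := hdpos x hx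
    have hdy := hdpos y hy
    set m := min (Metric.infDist x (frontier G)) (Metric.infDist y (frontier G)) with hm
    have hmpos : 0 < m := lt_min hdx hdy
    -- from jMetric < log(1+2r) deduce dist x y < 2 r m
    have h1 : 1 + dist x y / m < 1 + 2 * r := by
      have := hjy
      rw [jMetric, ← hm] at this
      have hpos : 0 < 1 + dist x y / m := by positivity
      exact (Real.log_lt_log_iff hpos (by linarith)).1 this
    have hD : dist x y < 2 * r * m := by
      have : dist x y / m < 2 * r := by linarith
      calc dist x y = dist x y / m * m := by field_simp
        _ < 2 * r * m := by exact mul_lt_mul_of_pos_right this hmpos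
    refine ⟨hy, ?_⟩
    have hbound : sMetric G x y ≤ dist x y / (2 * m) := by
      refine Real.iSup_le (fun z => Real.iSup_le (fun hz => ?_) (by positivity))
        (by positivity)
      have hzx : m ≤ dist z x := by
        rw [dist_comm]
        exact le_trans (min_le_left _ _) (Metric.infDist_le_dist_of_mem hz)
      have hzy : m ≤ dist z y := by
        rw [dist_comm]
        exact le_trans (min_le_right _ _) (Metric.infDist_le_dist_of_mem hz)
      exact div_le_div_of_nonneg_left dist_nonneg (by linarith) (by linarith)
    have : dist x y / (2 * m) < r := by
      rw [div_lt_iff₀ (by linarith)]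
      linarith
    exact lt_of_le_of_lt hbound this
  · -- part (ii)
    rintro r ⟨hr0, hr3⟩ y ⟨hy, hsy⟩
    have hdx := hdpos x hx
    have hdy := hdpos y hy
    set m := min (Metric.infDist x (frontier G)) (Metric.infDist y (frontier G)) with hm
    have hmpos : 0 < m := lt_min hdx hdy
    set D := dist x y with hDdef
    have hDnn : 0 ≤ D := dist_nonneg
    refine ⟨hy, ?_⟩
    -- find a boundary point realizing the smaller distance
    obtain ⟨w, hwmem, hwd⟩ : ∃ w ∈ ({x, y} : Set _),
        Metric.infDist w (frontier G) = m := by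
      rcases min_cases (Metric.infDist x (frontier G))
        (Metric.infDist y (frontier G)) with ⟨h, -⟩ | ⟨h, -⟩
      · exact ⟨x, Set.mem_insert _ _, h.symm⟩
      · exact ⟨y, Set.mem_insert_of_mem _ rfl, h.symm⟩
    obtain ⟨z, hz, hzd⟩ := isClosed_frontier.exists_infDist_eq_dist hfr w
    have hzw : dist w z = m := by rw [← hzd, hwd]
    -- the denominator at z is at most 2m + D
    have hden : dist z x + dist z y ≤ 2 * m + D := by
      rcases hwmem with rfl | hwy
      · have h1 : dist z w = m := by rwa [dist_comm]
        have h2 : dist z y ≤ dist z w + dist w y := dist_triangle _ _ _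
        rw [h1] at h2 ⊢
        have : dist w y = D := hDdef.symm
        linarith
      · rcases hwy with rfl
        have h1 : dist z w = m := by rwa [dist_comm]
        have h2 : dist z x ≤ dist z w + dist w x := dist_triangle _ _ _
        rw [h1] at h2 ⊢
        have : dist w x = D := by rw [hDdef, dist_comm]
        linarith
    have hdenpos : 0 < dist z x + dist z y := by
      have h1 : 0 < dist z x := by
        rw [dist_comm]
        exact lt_of_lt_of_le hdx (Metric.infDist_le_dist_of_mem hz)
      have h2 : 0 ≤ dist z y := dist_nonneg
      linarith
    -- the single term at z is below the sup, hence < r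
    have hb : BddAbove (Set.range fun z' =>
        ⨆ _ : z' ∈ frontier G, dist x y / (dist z' x + dist z' y)) := by
      refine ⟨1, ?_⟩
      rintro v ⟨z', rfl⟩
      refine Real.iSup_le (fun hz' => ?_) zero_le_one
      refine div_le_one_of_le₀ ?_ (by positivity)
      calc dist x y ≤ dist x z' + dist z' y := dist_triangle _ _ _
        _ = dist z' x + dist z' y := by rw [dist_comm x z']
    have hterm : D / (dist z x + dist z y) < r := by
      refine lt_of_le_of_lt ?_ hsy
      rw [sMetric, hDdef]
      have heq : (⨆ _ : z ∈ frontier G, dist x y / (dist z x + dist z y))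
          = dist x y / (dist z x + dist z y) := ciSup_pos hz
      calc dist x y / (dist z x + dist z y)
          = ⨆ _ : z ∈ frontier G, dist x y / (dist z x + dist z y) := heq.symm
        _ ≤ _ := le_ciSup hb z
    -- hence D/(2m+D) < r and D/m < 2r/(1-3r)
    have h2 : D / (2 * m + D) < r :=
      lt_of_le_of_lt (div_le_div_of_nonneg_left hDnn hdenpos hden) hterm
    have h3 : D < r * (2 * m + D) := by
      rw [div_lt_iff₀ (by linarith)] at h2; linarith
    have hDm : D / m < 2 * r / (1 - 3 * r) := by
      rw [div_lt_div_iff₀ hmpos (by linarith)]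
      nlinarith
    rw [jMetric, ← hm, ← hDdef]
    have hlhs : 0 < 1 + D / m := by positivity
    exact Real.log_lt_log hlhs (by linarith)
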